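/- New second-order FHR moment function for the Poisson model (equation 3.19). In the Poisson panel data model with T = 2, for any function m : ℕ × ℝ^k → ℝ the function φ(y_0, y_1, y_2, x_1, x_2) = (y_1(y_1 − 1) − y_2(y_2 − 1) · e^{2(z_1 − z_2)'θ}) · m(y_0, x_1) satisfies the FHR conditions with μ the counting measure on ℕ: (ii) for all (y_0, y_1, x_1, x_2, a), Σ_{y_2 ∈ ℕ} φ(y_0, y_1, y_2, x_1, x_2) f_θ(y_2 | y_1, x_2, a) = (y_1(y_1 − 1) − e^{2(z_1'θ + a)}) m(y_0, x_1), which does not depend on x_2; and (i) for all (y_0, x_1, x_2, a), Σ_{y_1 ∈ ℕ} Σ_{y_2 ∈ ℕ} φ(y_0, y_1, y_2, x_1, x_2) f_θ(y_2 | y_1, x_2, a) f_θ(y_1 | y_0, x_1, a) = 0. -/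

import Mathlib

/-!
The new second-order FHR moment function for the Poisson panel data model with
feedback (T = 2) of Bonhomme, Dano & Graham, equation (3.19):
`φ(y_0, y_1, y_2, x_1, x_2) = (y_1(y_1−1) − y_2(y_2−1) e^{2(z_1 − z_2)'θ}) m(y_0, x_1)`
satisfies the FHR conditions (ii) and (i), with μ the counting measure on ℕ.
-/

open scoped BigOperators

noncomputable section

variable {k : ℕ}

/-- The linear index `z_t'θ = x_t'θ_x + y_{t−1} θ_y` of the Poisson model, where
`z_t = (x_t', y_{t−1})'` and `θ = (θ_x', θ_y)'`. -/
noncomputable def poisLin (θx : Fin k → ℝ) (θy : ℝ) (x : Fin k → ℝ) (ylag : ℕ) : ℝ :=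
  (∑ i, x i * θx i) + (ylag : ℝ) * θy

/-- The Poisson conditional probability mass function with mean `e^{z'θ + a}`:
`f_θ(y | y₋, x, a) = exp(−e^{z'θ + a}) e^{y (z'θ + a)} / y!`. -/
noncomputable def poisPMF (lin a : ℝ) (y : ℕ) : ℝ :=
  Real.exp (-Real.exp (lin + a)) * Real.exp ((y : ℝ) * (lin + a)) / (Nat.factorial y)

private lemma exp_tsum' (x : ℝ) : ∑' n : ℕ, x ^ n / n.factorial = Real.exp x := by
  rw [Real.exp_eq_exp_ℝ, NormedSpace.exp_eq_tsum_div]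

private lemma shift2 (x : ℝ) (n : ℕ) :
    ((n + 2 : ℕ) : ℝ) * (((n + 2 : ℕ) : ℝ) - 1) * x ^ (n + 2) / (n + 2).factorial
      = x ^ 2 * (x ^ n / n.factorial) := by
  have h0 : ((n.factorial : ℝ)) ≠ 0 := Nat.cast_ne_zero.mpr n.factorial_ne_zero
  rw [Nat.factorial_succ, Nat.factorial_succ]
  push_cast
  field_simp
  ring

private lemma summable_g (x : ℝ) :
    Summable (fun y : ℕ => (y : ℝ) * ((y : ℝ) - 1) * x ^ y / y.factorial) := by
  rw [← summable_nat_add_iff 2]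
  have he : (fun n : ℕ => ((n + 2 : ℕ) : ℝ) * (((n + 2 : ℕ) : ℝ) - 1) * x ^ (n + 2)
      / (n + 2).factorial) = fun n : ℕ => x ^ 2 * (x ^ n / n.factorial) := by
    funext n; exact shift2 x n
  have h2 : Summable (fun n : ℕ => x ^ 2 * (x ^ n / n.factorial)) :=
    (Real.summable_pow_div_factorial x).mul_left _
  rw [← he] at h2
  exact h2

private lemma tsum_g (x : ℝ) :
    ∑' y : ℕ, (y : ℝ) * ((y : ℝ) - 1) * x ^ y / y.factorial = x ^ 2 * Real.exp x := by
  have hs := summable_g x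
  rw [← hs.sum_add_tsum_nat_add 2]
  have he : (fun n : ℕ => ((n + 2 : ℕ) : ℝ) * (((n + 2 : ℕ) : ℝ) - 1) * x ^ (n + 2)
      / (n + 2).factorial) = fun n : ℕ => x ^ 2 * (x ^ n / n.factorial) := by
    funext n; exact shift2 x n
  have : ∑' n : ℕ, ((n + 2 : ℕ) : ℝ) * (((n + 2 : ℕ) : ℝ) - 1) * x ^ (n + 2)
      / (n + 2).factorial = x ^ 2 * Real.exp x := by
    rw [he, tsum_mul_left, exp_tsum']
  simpa [Finset.sum_range_succ] using this

private lemma poisPMF_eq (lin a : ℝ) (y : ℕ) :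
    poisPMF lin a y
      = Real.exp (-Real.exp (lin + a)) * ((Real.exp (lin + a)) ^ y / y.factorial) := by
  rw [poisPMF, ← Real.exp_nat_mul]
  ring

private lemma summable_poisPMF (lin a : ℝ) : Summable (fun y : ℕ => poisPMF lin a y) := by
  simp only [poisPMF_eq]
  exact (Real.summable_pow_div_factorial _).mul_left _

private lemma tsum_poisPMF (lin a : ℝ) : ∑' y : ℕ, poisPMF lin a y = 1 := by
  simp only [poisPMF_eq]
  rw [tsum_mul_left, exp_tsum', ← Real.exp_add]
  simp

private lemma summable_mom2 (lin a : ℝ) :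
    Summable (fun y : ℕ => (y : ℝ) * ((y : ℝ) - 1) * poisPMF lin a y) := by
  have he : (fun y : ℕ => (y : ℝ) * ((y : ℝ) - 1) * poisPMF lin a y)
      = fun y : ℕ => Real.exp (-Real.exp (lin + a)) *
        ((y : ℝ) * ((y : ℝ) - 1) * (Real.exp (lin + a)) ^ y / y.factorial) := by
    funext y; rw [poisPMF_eq]; ring
  rw [he]
  exact (summable_g _).mul_left _

private lemma tsum_mom2 (lin a : ℝ) :
    ∑' y : ℕ, (y : ℝ) * ((y : ℝ) - 1) * poisPMF lin a y = Real.exp (2 * (lin + a)) := by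
  have he : (fun y : ℕ => (y : ℝ) * ((y : ℝ) - 1) * poisPMF lin a y)
      = fun y : ℕ => Real.exp (-Real.exp (lin + a)) *
        ((y : ℝ) * ((y : ℝ) - 1) * (Real.exp (lin + a)) ^ y / y.factorial) := by
    funext y; rw [poisPMF_eq]; ring
  rw [he, tsum_mul_left, tsum_g, Real.exp_neg, two_mul, Real.exp_add, sq]
  field_simp
  rw [show (lin + a) * (1 + 1) = lin + lin + (a + a) by ring, Real.exp_add, Real.exp_add,
    Real.exp_add]
  ring

/-- **New second-order FHR moment function for the Poisson model (equation 3.19).**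
For `φ = (y_1(y_1 − 1) − y_2(y_2 − 1) e^{2(z_1 − z_2)'θ}) m(y_0, x_1)`:
(ii) summing `φ f_θ(y_2 | y_1, x_2, a)` over `y_2 ∈ ℕ` gives
`(y_1(y_1 − 1) − e^{2(z_1'θ + a)}) m(y_0, x_1)`, which does not depend on `x_2`; and
(i) the double sum of `φ f_θ(y_2|y_1,x_2,a) f_θ(y_1|y_0,x_1,a)` over `(y_1, y_2)`
is zero. -/
theorem poisson_second_order_FHR
    (θx : Fin k → ℝ) (θy : ℝ) (m : ℕ → (Fin k → ℝ) → ℝ) :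
    -- condition (ii)
    (∀ (y0 y1 : ℕ) (x1 x2 : Fin k → ℝ) (a : ℝ),
      (∑' y2 : ℕ,
          ((y1 : ℝ) * ((y1 : ℝ) - 1) - (y2 : ℝ) * ((y2 : ℝ) - 1) *
              Real.exp (2 * (poisLin θx θy x1 y0 - poisLin θx θy x2 y1))) * m y0 x1 *
            poisPMF (poisLin θx θy x2 y1) a y2) =
        ((y1 : ℝ) * ((y1 : ℝ) - 1) -
            Real.exp (2 * (poisLin θx θy x1 y0 + a))) * m y0 x1) ∧
    -- condition (i)
    (∀ (y0 : ℕ) (x1 x2 : Fin k → ℝ) (a : ℝ),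
      (∑' y1 : ℕ,
          (∑' y2 : ℕ,
            ((y1 : ℝ) * ((y1 : ℝ) - 1) - (y2 : ℝ) * ((y2 : ℝ) - 1) *
                Real.exp (2 * (poisLin θx θy x1 y0 - poisLin θx θy x2 y1))) * m y0 x1 *
              poisPMF (poisLin θx θy x2 y1) a y2) *
            poisPMF (poisLin θx θy x1 y0) a y1) = 0) := by
  have hii : ∀ (y0 y1 : ℕ) (x1 x2 : Fin k → ℝ) (a : ℝ),
      (∑' y2 : ℕ,
          ((y1 : ℝ) * ((y1 : ℝ) - 1) - (y2 : ℝ) * ((y2 : ℝ) - 1) *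
              Real.exp (2 * (poisLin θx θy x1 y0 - poisLin θx θy x2 y1))) * m y0 x1 *
            poisPMF (poisLin θx θy x2 y1) a y2) =
        ((y1 : ℝ) * ((y1 : ℝ) - 1) -
            Real.exp (2 * (poisLin θx θy x1 y0 + a))) * m y0 x1 := by
    intro y0 y1 x1 x2 a
    set L1 := poisLin θx θy x1 y0 with hL1
    set L2 := poisLin θx θy x2 y1 with hL2
    have h1 := summable_poisPMF L2 a
    have h2 := summable_mom2 L2 a
    have he : (fun y2 : ℕ =>
        ((y1 : ℝ) * ((y1 : ℝ) - 1) - (y2 : ℝ) * ((y2 : ℝ) - 1) *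
          Real.exp (2 * (L1 - L2))) * m y0 x1 * poisPMF L2 a y2)
        = fun y2 : ℕ => ((y1 : ℝ) * ((y1 : ℝ) - 1) * m y0 x1) * poisPMF L2 a y2
          - (Real.exp (2 * (L1 - L2)) * m y0 x1) *
            ((y2 : ℝ) * ((y2 : ℝ) - 1) * poisPMF L2 a y2) := by
      funext y2; ring
    rw [he, Summable.tsum_sub (h1.mul_left _) (h2.mul_left _), tsum_mul_left, tsum_mul_left,
      tsum_poisPMF, tsum_mom2]
    have hc : Real.exp (2 * (L1 - L2)) * Real.exp (2 * (L2 + a))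
        = Real.exp (2 * (L1 + a)) := by
      rw [← Real.exp_add]; congr 1; ring
    rw [← hc]; ring
  refine ⟨hii, ?_⟩
  intro y0 x1 x2 a
  set L1 := poisLin θx θy x1 y0 with hL1
  have h1 := summable_poisPMF L1 a
  have h2 := summable_mom2 L1 a
  have he : (fun y1 : ℕ =>
      (∑' y2 : ℕ,
        ((y1 : ℝ) * ((y1 : ℝ) - 1) - (y2 : ℝ) * ((y2 : ℝ) - 1) *
            Real.exp (2 * (poisLin θx θy x1 y0 - poisLin θx θy x2 y1))) * m y0 x1 *
          poisPMF (poisLin θx θy x2 y1) a y2) *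
        poisPMF L1 a y1)
      = fun y1 : ℕ => (m y0 x1) * ((y1 : ℝ) * ((y1 : ℝ) - 1) * poisPMF L1 a y1)
        - (Real.exp (2 * (L1 + a)) * m y0 x1) * poisPMF L1 a y1 := by
    funext y1
    rw [hii y0 y1 x1 x2 a]
    ring
  rw [he, Summable.tsum_sub (h2.mul_left _) (h1.mul_left _), tsum_mul_left, tsum_mul_left,
    tsum_poisPMF, tsum_mom2]
  ring

end
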